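/- Let n be a positive integer and let ν be a Borel probability measure on ℝ with compact support such that ∫_ℝ x dν(x) = 0. Let λ_max denote the supremum of the topological support of ν (a finite real number, and λ_max ≥ 0 since ν has mean zero), and define g : ℝ → ℝ by g(λ) = (ν([λ,∞)))^{1/n}. Assume that g is concave on the open ray (−∞, λ_max). Then for every real t > 0 one has g(−t·λ_max) ≥ 1 − 1/√(n·t). -/

import Mathlib

open MeasureTheory Set

lemma dh_exp_ge_one_add_sq {r : ℝ} (hr : 0 ≤ r) : 1 + r ^ 2 ≤ Real.exp r := by
  have h := Real.sum_le_exp_of_nonneg hr 4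
  have hs : (∑ i ∈ Finset.range 4, r ^ i / (Nat.factorial i : ℝ)) =
      1 + r + r ^ 2 / 2 + r ^ 3 / 6 := by
    rw [Finset.sum_range_succ, Finset.sum_range_succ, Finset.sum_range_succ,
      Finset.sum_range_one]
    norm_num [Nat.factorial]
  rw [hs] at h
  nlinarith [sq_nonneg (r - 3), mul_nonneg (mul_nonneg hr hr) hr]

lemma dh_key_ineq (n : ℕ) (hn : 0 < n) (t : ℝ) (ht : 0 < t) :
    1 - 1 / Real.sqrt ((n : ℝ) * t) ≤ (t / (1 + t)) ^ ((1 : ℝ) / n) := by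
  have hn' : (0 : ℝ) < n := by exact_mod_cast hn
  have hnt : (0 : ℝ) < n * t := by positivity
  have hq : (0 : ℝ) < t / (1 + t) := by positivity
  rcases le_or_gt (Real.sqrt (n * t)) 1 with h1 | h1
  · have : 1 ≤ 1 / Real.sqrt (n * t) := by
      rw [le_div_iff₀ (Real.sqrt_pos.2 hnt)]
      simpa using h1
    have := Real.rpow_nonneg hq.le ((1 : ℝ) / n)
    linarith
  · set ε : ℝ := 1 / Real.sqrt (n * t) with hε
    have hs : 0 < Real.sqrt (n * t) := Real.sqrt_pos.2 hnt
    have hε0 : 0 < ε := by positivity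
    have hε1 : ε < 1 := by rw [hε, div_lt_one hs]; exact h1
    have hkey : (1 - ε) ^ n ≤ t / (1 + t) := by
      set r : ℝ := n * ε with hr
      have hr0 : 0 ≤ r := by positivity
      have h2 : (1 - ε) ^ n ≤ Real.exp (-r) := by
        have hb : 1 - ε ≤ Real.exp (-ε) := by
          have := Real.add_one_le_exp (-ε); linarith
        calc (1 - ε) ^ n ≤ (Real.exp (-ε)) ^ n :=
              pow_le_pow_left₀ (by linarith) hb n
          _ = Real.exp (-r) := by rw [← Real.exp_nat_mul, hr]; ring_nf
      have hε2 : ε ^ 2 = 1 / ((n : ℝ) * t) := by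
        rw [hε, div_pow, one_pow, Real.sq_sqrt hnt.le]
      have hrsq : r ^ 2 = (n : ℝ) / t := by
        rw [hr, mul_pow, hε2]; field_simp
      have hr2 : 1 / t ≤ r ^ 2 := by
        rw [hrsq]; gcongr
        exact_mod_cast hn
      have h3 : 1 + 1 / t ≤ Real.exp r := by
        have := dh_exp_ge_one_add_sq hr0
        linarith
      have h4 : Real.exp (-r) ≤ t / (1 + t) := by
        have h5 : (1 + t) / t ≤ Real.exp r := by
          rw [add_div, div_self ht.ne']; linarith
        have h6 : (Real.exp r)⁻¹ ≤ ((1 + t) / t)⁻¹ :=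
          inv_anti₀ (by positivity) h5
        rw [Real.exp_neg]
        rwa [inv_div] at h6
      linarith
    have heq : (1 - ε) = ((1 - ε) ^ n) ^ ((1 : ℝ) / n) := by
      rw [← Real.rpow_natCast (1 - ε) n, ← Real.rpow_mul (by linarith)]
      rw [mul_one_div, div_self (ne_of_gt hn'), Real.rpow_one]
    rw [heq]
    exact Real.rpow_le_rpow (pow_nonneg (by linarith) n) hkey (by positivity)

/-- Lemma 4.12: tail estimate for a compactly supported probability measure `ν` on `ℝ` with
mean zero whose upper tail function `g(λ) = ν([λ,∞))^(1/n)` is concave on `(−∞, λ_max)`,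
where `λ_max` is the supremum of the topological support of `ν`. Then
`g(−t·λ_max) ≥ 1 − 1/√(nt)` for all `t > 0`. -/
theorem dh_measure_tail_estimate
    (n : ℕ) (hn : 0 < n) (ν : Measure ℝ) [IsProbabilityMeasure ν]
    (hcpt : ∃ M : ℝ, ν {x : ℝ | M < |x|} = 0)
    (hmean : ∫ x, x ∂ν = 0)
    (lamMax : ℝ)
    (hlamMax : lamMax = sSup {x : ℝ | ∀ U ∈ nhds x, 0 < ν U})
    (g : ℝ → ℝ)
    (hg : g = fun lam => (ν (Set.Ici lam)).toReal ^ ((1 : ℝ) / n))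
    (hconc : ConcaveOn ℝ (Set.Iio lamMax) g) :
    ∀ t : ℝ, 0 < t → 1 - 1 / Real.sqrt ((n : ℝ) * t) ≤ g (-t * lamMax) := by
  intro t ht
  obtain ⟨M, hM⟩ := hcpt
  have haeM : ∀ᵐ x ∂ν, |x| ≤ M := by
    rw [ae_iff]; simpa [not_le] using hM
  have hint : Integrable (fun x : ℝ => x) ν := by
    refine Integrable.mono' (integrable_const M) aestronglyMeasurable_id ?_
    simpa using haeM
  have hIoiM : ∀ y : ℝ, M ≤ y → ν (Set.Ioi y) = 0 := by
    intro y hy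
    refine measure_mono_null (fun x hx => ?_) hM
    simp only [Set.mem_Ioi] at hx
    simp only [Set.mem_setOf_eq]
    exact lt_of_le_of_lt hy (lt_of_lt_of_le hx (le_abs_self x))
  set S := {x : ℝ | ∀ U ∈ nhds x, 0 < ν U} with hS
  have hSbdd : BddAbove S := by
    refine ⟨M, fun x hx => ?_⟩
    by_contra hxM
    push_neg at hxM
    have h1 := hx (Set.Ioi M) (Ioi_mem_nhds hxM)
    rw [hIoiM M le_rfl] at h1
    exact lt_irrefl 0 h1
  have hq0 : ∀ q : ℝ, lamMax < q → ν (Set.Ioi q) = 0 := by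
    intro q hq
    by_contra hne
    have hqT : 0 < ν (Set.Ioi q) := pos_iff_ne_zero.2 hne
    set T := {y : ℝ | 0 < ν (Set.Ioi y)} with hT
    have hqTm : q ∈ T := hqT
    have hTbdd : BddAbove T := by
      refine ⟨M, fun y hy => ?_⟩
      by_contra hyM
      push_neg at hyM
      rw [hT, Set.mem_setOf_eq, hIoiM y hyM.le] at hy
      exact lt_irrefl 0 hy
    set c := sSup T with hc
    have hqc : q ≤ c := le_csSup hTbdd hqTm
    have hcS : c ∈ S := by
      intro U hU
      obtain ⟨ε, hε, hball⟩ := Metric.mem_nhds_iff.1 hU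
      have h1 : ν (Set.Ioi (c + ε / 2)) = 0 := by
        by_contra h
        have hmem : c + ε / 2 ∈ T := pos_iff_ne_zero.2 h
        have := le_csSup hTbdd hmem
        linarith
      obtain ⟨y, hyT, hy⟩ := exists_lt_of_lt_csSup ⟨q, hqTm⟩ (by linarith : c - ε < c)
      have hyc : y ≤ c := le_csSup hTbdd hyT
      have hsub : Set.Ioi y ⊆ Set.Ioo (c - ε) (c + ε) ∪ Set.Ioi (c + ε / 2) := by
        intro x hx
        simp only [Set.mem_Ioi] at hx
        rcases lt_or_ge x (c + ε) with h' | h'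
        · exact Or.inl ⟨by linarith, h'⟩
        · exact Or.inr (by simp only [Set.mem_Ioi]; linarith)
      have hle : ν (Set.Ioi y) ≤ ν (Set.Ioo (c - ε) (c + ε)) + ν (Set.Ioi (c + ε / 2)) :=
        (measure_mono hsub).trans (measure_union_le _ _)
      rw [h1, add_zero] at hle
      have hIooU : Set.Ioo (c - ε) (c + ε) ⊆ U := by
        rw [← Real.ball_eq_Ioo]; exact hball
      calc (0 : ENNReal) < ν (Set.Ioi y) := hyT
        _ ≤ ν (Set.Ioo (c - ε) (c + ε)) := hle
        _ ≤ ν U := measure_mono hIooU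
    have : c ≤ lamMax := hlamMax ▸ le_csSup hSbdd hcS
    linarith
  have hIoi : ν (Set.Ioi lamMax) = 0 := by
    have heq : Set.Ioi lamMax = ⋃ k : ℕ, Set.Ioi (lamMax + 1 / (k + 1)) := by
      ext x
      simp only [Set.mem_Ioi, Set.mem_iUnion]
      constructor
      · intro hx
        obtain ⟨k, hk⟩ := exists_nat_one_div_lt (sub_pos.2 hx)
        exact ⟨k, by linarith⟩
      · rintro ⟨k, hk⟩
        have : (0 : ℝ) < 1 / (k + 1) := by positivity
        linarith
    rw [heq]
    refine measure_iUnion_null fun k => hq0 _ ?_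
    have : (0 : ℝ) < 1 / ((k : ℝ) + 1) := by positivity
    linarith
  have hub : ∀ᵐ x ∂ν, x ≤ lamMax := by
    rw [ae_iff]; simp only [not_le]; exact hIoi
  have hlam0 : 0 ≤ lamMax := by
    by_contra hneg
    push_neg at hneg
    have hle : ∫ x, x ∂ν ≤ ∫ _, lamMax ∂ν :=
      integral_mono_ae hint (integrable_const _) hub
    rw [hmean, integral_const] at hle
    simp at hle
    linarith
  rcases eq_or_lt_of_le hlam0 with h0 | hpos
  · -- lamMax = 0 : the measure is the Dirac mass at 0, so g 0 = 1
    have hnonneg : ∀ᵐ x ∂ν, 0 ≤ -x := by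
      filter_upwards [hub] with x hx
      rw [← h0] at hx; linarith
    have hzero : (fun x : ℝ => -x) =ᵐ[ν] 0 := by
      rw [← integral_eq_zero_iff_of_nonneg_ae hnonneg hint.neg]
      rw [integral_neg, hmean, neg_zero]
    have haeq : ∀ᵐ x ∂ν, x = 0 := by
      filter_upwards [hzero] with x hx
      simpa using hx
    have hIio : ν (Set.Iio 0) = 0 := by
      rw [ae_iff] at haeq
      refine measure_mono_null (fun x hx => ?_) haeq
      simp only [Set.mem_Iio] at hx
      simp only [Set.mem_setOf_eq]
      exact ne_of_lt hx
    have hIci : ν (Set.Ici (0 : ℝ)) = 1 := by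
      have := measure_add_measure_compl (measurableSet_Ici (a := (0 : ℝ))) (μ := ν)
      rw [compl_Ici, hIio, add_zero, measure_univ] at this
      exact this
    have hgval : g (-t * lamMax) = 1 := by
      rw [hg, ← h0]
      simp only [mul_zero, neg_zero]
      rw [hIci]
      simp
    rw [hgval]
    have h1 : 0 ≤ 1 / Real.sqrt ((n : ℝ) * t) := by positivity
    linarith
  · -- main case : lamMax > 0
    set lam0 : ℝ := -t * lamMax with hlam0def
    have hlam0neg : lam0 < 0 := by
      rw [hlam0def]; nlinarith
    set p : ℝ := (ν (Set.Ici lam0)).toReal with hp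
    have hp0 : 0 ≤ p := ENNReal.toReal_nonneg
    -- the comparison function
    set f : ℝ → ℝ := fun x => lam0 + (Set.Ici lam0).indicator (fun _ => lamMax - lam0) x
      with hf
    have hfint : Integrable f ν := by
      refine (integrable_const lam0).add ?_
      exact (integrable_const (lamMax - lam0)).indicator measurableSet_Ici
    have hbound : ∀ᵐ x ∂ν, x ≤ f x := by
      filter_upwards [hub] with x hx
      show x ≤ lam0 + (Set.Ici lam0).indicator (fun _ => lamMax - lam0) x
      rcases le_or_gt lam0 x with h' | h'
      · rw [Set.indicator_of_mem (Set.mem_Ici.2 h')]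
        linarith
      · rw [Set.indicator_of_notMem (fun hc => absurd (Set.mem_Ici.1 hc) (not_le.2 h'))]
        linarith
    have hintf : ∫ x, f x ∂ν = lam0 + (lamMax - lam0) * p := by
      rw [hf]
      rw [integral_add (integrable_const lam0)
        ((integrable_const (lamMax - lam0)).indicator measurableSet_Ici)]
      rw [integral_const, probReal_univ, integral_indicator_const _ measurableSet_Ici]
      simp [hp, mul_comm, Measure.real]
    have hle : (0 : ℝ) ≤ lam0 + (lamMax - lam0) * p := by
      have := integral_mono_ae hint hfint hbound
      rw [hmean, hintf] at this
      exact this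
    have hpt : t / (1 + t) ≤ p := by
      rw [div_le_iff₀ (by linarith : (0 : ℝ) < 1 + t)]
      rw [hlam0def] at hle
      nlinarith
    -- conclude
    have hgval : g lam0 = p ^ ((1 : ℝ) / n) := by rw [hg]
    rw [hgval]
    calc 1 - 1 / Real.sqrt ((n : ℝ) * t) ≤ (t / (1 + t)) ^ ((1 : ℝ) / n) :=
          dh_key_ineq n hn t ht
      _ ≤ p ^ ((1 : ℝ) / n) :=
          Real.rpow_le_rpow (by positivity) hpt (by positivity)
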